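/- If H is a q-sparse graph, then for any graph J, the maximum size ν(H,J) of a collection of pairwise edge-disjoint copies of J in H satisfies ν(H,J) ≤ e · E_q X_J, where E_q X_J is the expected number of copies of J in G_{n,q}. -/

import Mathlib

open SimpleGraph

/-- Number of (unlabeled) copies of `J` in `G`: subgraphs of `G` isomorphic to `J`. -/
noncomputable def copyCount {α β : Type*} (J : SimpleGraph α) (G : SimpleGraph β) : ℕ :=
  Set.ncard {A : G.Subgraph | Nonempty (A.coe ≃g J)}

/-- Expected number of copies of `J` in the Erdős–Rényi random graph `G(n,q)`. -/
noncomputable def expCopies {α : Type*} (n : ℕ) (J : SimpleGraph α) (q : ℝ) : ℝ :=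
  (copyCount J (⊤ : SimpleGraph (Fin n)) : ℝ) * q ^ (Set.ncard J.edgeSet)

/-- `H` is `q`-sparse: every subgraph `I ⊆ H` has `E_q X_I ≥ 1`. -/
def qSparse {n : ℕ} (q : ℝ) (H : SimpleGraph (Fin n)) : Prop :=
  ∀ I : H.Subgraph, 1 ≤ expCopies n I.coe q


lemma mySubgraphFinite {V : Type*} [Finite V] (G : SimpleGraph V) : Finite G.Subgraph := by
  have h : Function.Injective (fun A : G.Subgraph => (A.verts, A.Adj)) := by
    intro A B hAB
    simp only [Prod.mk.injEq] at hAB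
    ext <;> simp [hAB.1, hAB.2]
  exact Finite.of_injective _ h

lemma mySubgraphMapInj {V W : Type*} {X : SimpleGraph V} {Y : SimpleGraph W} (h : X →g Y)
    (hinj : Function.Injective h) : Function.Injective (SimpleGraph.Subgraph.map h) := by
  intro A B hAB
  have hv : A.verts = B.verts := by
    have := congrArg SimpleGraph.Subgraph.verts hAB
    simpa [Set.image_eq_image hinj] using this
  have ha : A.Adj = B.Adj := by
    have := congrArg SimpleGraph.Subgraph.Adj hAB
    funext u v
    have h2 : Relation.Map A.Adj h h (h u) (h v) ↔ Relation.Map B.Adj h h (h u) (h v) := by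
      rw [show Relation.Map A.Adj h h = Relation.Map B.Adj h h from this]
    simp only [Relation.Map] at h2
    apply propext
    constructor
    · intro hA
      obtain ⟨a, b, hab, ha', hb'⟩ := h2.mp ⟨u, v, hA, rfl, rfl⟩
      rwa [hinj ha', hinj hb'] at hab
    · intro hB
      obtain ⟨a, b, hab, ha', hb'⟩ := h2.mpr ⟨u, v, hB, rfl, rfl⟩
      rwa [hinj ha', hinj hb'] at hab
  ext u v
  · rw [hv]
  · rw [ha]

/-- Iso between a subgraph and its image under an injective hom. -/
noncomputable def myIsoMapCoe {V W : Type*} {X : SimpleGraph V} {Y : SimpleGraph W} (h : X →g Y)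
    (hinj : Function.Injective h) (A : X.Subgraph) : A.coe ≃g (A.map h).coe where
  toEquiv := (Equiv.Set.image h A.verts hinj)
  map_rel_iff' := by
    intro a b
    simp only [Equiv.Set.image, Equiv.Set.imageOfInjOn, Equiv.coe_fn_mk, Subgraph.coe_adj,
      Subgraph.map_adj, Relation.Map]
    constructor
    · rintro ⟨u, v, huv, hu, hv⟩
      rwa [hinj hu, hinj hv] at huv
    · intro hab
      exact ⟨a, b, hab, rfl, rfl⟩

lemma myMapHomTop {V : Type*} {G : SimpleGraph V} (G' : G.Subgraph) :
    (⊤ : G'.coe.Subgraph).map G'.hom = G' := by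
  ext u v
  · simp [Subgraph.map]
  · simp only [Subgraph.map_adj, Relation.Map, Subgraph.top_adj, Subgraph.coe_adj, Subgraph.hom]
    constructor
    · rintro ⟨a, b, hab, rfl, rfl⟩
      exact hab
    · intro huv
      exact ⟨⟨u, G'.edge_vert huv⟩, ⟨v, G'.edge_vert huv.symm⟩, huv, rfl, rfl⟩

lemma myMapIsoTop {V W : Type*} {X : SimpleGraph V} {Y : SimpleGraph W} (e : X ≃g Y) :
    (⊤ : X.Subgraph).map e.toHom = ⊤ := by
  ext u v
  · simp [Subgraph.map, Set.image_univ, e.surjective.range_eq]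
  · simp only [Subgraph.map_adj, Relation.Map, Subgraph.top_adj]
    constructor
    · rintro ⟨a, b, hab, rfl, rfl⟩
      exact e.map_adj_iff.mpr hab
    · intro huv
      exact ⟨e.symm u, e.symm v, by simpa using e.symm.map_adj_iff.mpr huv, by simp, by simp⟩

lemma myNcardEdgeCoe {V : Type*} {G : SimpleGraph V} (G' : G.Subgraph) :
    G'.coe.edgeSet.ncard = G'.edgeSet.ncard := by
  rw [← Subgraph.image_coe_edgeSet_coe]
  exact (Set.ncard_image_of_injective _ (Sym2.map.injective Subtype.val_injective)).symm

lemma myIsoEdgeCard {V W : Type*} {X : SimpleGraph V} {Y : SimpleGraph W} (e : X ≃g Y) :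
    X.edgeSet.ncard = Y.edgeSet.ncard := by
  rw [← Nat.card_coe_set_eq, ← Nat.card_coe_set_eq]
  exact Nat.card_congr e.mapEdgeSet

lemma mySupEdgeSet {V : Type*} {G : SimpleGraph V} (S : Finset G.Subgraph) :
    (S.sup id).edgeSet = ⋃ A ∈ S, A.edgeSet := by
  rw [← Finset.sup_set_eq_biUnion]
  exact Finset.comp_sup_eq_sup_comp Subgraph.edgeSet (fun _ _ => Subgraph.edgeSet_sup)
    Subgraph.edgeSet_bot

lemma mySupEdgeCard {V : Type*} [Finite V] {G : SimpleGraph V} (S : Finset G.Subgraph) (m : ℕ)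
    (hm : ∀ A ∈ S, A.edgeSet.ncard = m)
    (hdisj : ∀ A ∈ S, ∀ B ∈ S, A ≠ B → A.edgeSet ∩ B.edgeSet = ∅) :
    (S.sup id).edgeSet.ncard = S.card * m := by
  classical
  induction S using Finset.cons_induction with
  | empty => simp [Subgraph.edgeSet_bot]
  | cons a s ha ih =>
    rw [Finset.sup_cons, Finset.card_cons]
    have hdisj' : Disjoint a.edgeSet (s.sup id).edgeSet := by
      rw [Set.disjoint_iff_inter_eq_empty, mySupEdgeSet, Set.inter_iUnion₂]
      simp only [Set.iUnion_eq_empty]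
      intro B hB
      exact hdisj a (Finset.mem_cons_self a s) B (Finset.mem_cons_of_mem hB)
        (fun h => ha (h ▸ hB))
    have : (a ⊔ s.sup id).edgeSet.ncard = a.edgeSet.ncard + (s.sup id).edgeSet.ncard := by
      rw [show (a ⊔ s.sup id) = (a ⊔ Finset.sup s id) from rfl, Subgraph.edgeSet_sup]
      exact Set.ncard_union_eq hdisj' (Set.toFinite _) (Set.toFinite _)
    rw [show (id a ⊔ s.sup id) = (a ⊔ s.sup id) from rfl, this,
      hm a (Finset.mem_cons_self a s),
      ih (fun A hA => hm A (Finset.mem_cons_of_mem hA))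
        (fun A hA B hB hAB => hdisj A (Finset.mem_cons_of_mem hA) B (Finset.mem_cons_of_mem hB) hAB)]
    ring
lemma myMapBot {V W : Type*} {X : SimpleGraph V} {Y : SimpleGraph W} (h : X →g Y) :
    (⊥ : X.Subgraph).map h = ⊥ := by
  ext u v <;> simp [Subgraph.map, Relation.Map]

lemma myKey2 {n : ℕ} {α : Type*} (J : SimpleGraph α) {H : SimpleGraph (Fin n)}
    (S : Finset H.Subgraph)
    (hiso : ∀ A ∈ S, Nonempty (SimpleGraph.Subgraph.coe A ≃g J)) :
    copyCount (S.sup id).coe (⊤ : SimpleGraph (Fin n)) ≤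
      (copyCount J (⊤ : SimpleGraph (Fin n))).choose S.card := by
  classical
  haveI : Finite (⊤ : SimpleGraph (Fin n)).Subgraph := mySubgraphFinite _
  set K : SimpleGraph (Fin n) := ⊤ with hK
  set I : H.Subgraph := S.sup id with hI
  set CJ : Set K.Subgraph := {A | Nonempty (A.coe ≃g J)} with hCJ
  have hCJfin : CJ.Finite := Set.toFinite _
  set CJf : Finset K.Subgraph := hCJfin.toFinset with hCJf
  -- the map sending a copy of I to the finset of images of elements of S
  set T : K.Subgraph → Finset K.Subgraph := fun B =>
    if hB : Nonempty (B.coe ≃g I.coe) then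
      S.image (fun A => (I.restrict A).map (B.hom.comp hB.some.symm.toHom)) else ∅ with hT
  -- generic facts for B a copy of I
  have main : ∀ (B : K.Subgraph) (hB : Nonempty (B.coe ≃g I.coe)),
      (T B ⊆ CJf ∧ (T B).card = S.card) ∧ (T B).sup id = B := by
    intro B hB
    set f : B.coe ≃g I.coe := hB.some with hf
    set g : I.coe →g K := B.hom.comp f.symm.toHom with hg
    have ginj : Function.Injective g := by
      rw [hg, Hom.coe_comp]
      exact Function.Injective.comp Subtype.val_injective f.symm.injective
    have hcs : ∀ A ∈ S, SimpleGraph.Subgraph.coeSubgraph (I.restrict A) = A := by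
      intro A hA
      rw [Subgraph.coeSubgraph_restrict_eq]
      exact inf_eq_right.mpr (Finset.le_sup (f := id) hA)
    have hTB : T B = S.image (fun A => (I.restrict A).map g) := by
      rw [hT]; simp only [dif_pos hB]; rfl
    have hinjS : Set.InjOn (fun A => (I.restrict A).map g) S := by
      intro A₁ h₁ A₂ h₂ hEq
      have : I.restrict A₁ = I.restrict A₂ := mySubgraphMapInj g ginj hEq
      have := congrArg SimpleGraph.Subgraph.coeSubgraph this
      rwa [hcs A₁ h₁, hcs A₂ h₂] at this
    have hiso' : ∀ A ∈ S, Nonempty (((I.restrict A).map g).coe ≃g J) := by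
      intro A hA
      have e1 : (I.restrict A).coe ≃g ((I.restrict A).map g).coe := myIsoMapCoe g ginj _
      have e2 : (I.restrict A).coe ≃g A.coe := by
        have e := myIsoMapCoe I.hom Subtype.val_injective (I.restrict A)
        have hA' : (I.restrict A).map I.hom = A := hcs A hA
        rw [hA'] at e
        exact e
      exact ⟨((e1.symm.trans e2).trans (hiso A hA).some)⟩
    constructor
    · constructor
      · rw [hTB]
        intro C hC
        rw [Finset.mem_image] at hC
        obtain ⟨A, hA, rfl⟩ := hC
        rw [hCJf, Set.Finite.mem_toFinset]
        exact hiso' A hA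
      · rw [hTB, Finset.card_image_of_injOn hinjS]
    · -- sup of images is B
      rw [hTB, Finset.sup_image, Function.id_comp]
      have h1 : S.sup (fun A => (I.restrict A).map g) = (S.sup (fun A => I.restrict A)).map g := by
        have := Finset.comp_sup_eq_sup_comp (s := S) (f := fun A => I.restrict A)
          (fun C : I.coe.Subgraph => C.map g)
          (fun _ _ => Subgraph.map_sup g _ _) (myMapBot g)
        simpa [Function.comp_def] using this.symm
      have h2 : S.sup (fun A => I.restrict A) = (⊤ : I.coe.Subgraph) := by
        apply SimpleGraph.Subgraph.coeSubgraph_injective I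
        have hc1 : SimpleGraph.Subgraph.coeSubgraph (S.sup fun A => I.restrict A)
            = S.sup (fun A => SimpleGraph.Subgraph.coeSubgraph (I.restrict A)) := by
          have := Finset.comp_sup_eq_sup_comp (s := S) (f := fun A => I.restrict A)
            (fun C : I.coe.Subgraph => C.map I.hom)
            (fun _ _ => Subgraph.map_sup I.hom _ _) (myMapBot I.hom)
          simpa [Function.comp_def] using this
        rw [hc1, Finset.sup_congr rfl hcs,
          show SimpleGraph.Subgraph.coeSubgraph (⊤ : I.coe.Subgraph)
            = (⊤ : I.coe.Subgraph).map I.hom from rfl, myMapHomTop]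
        rfl
      rw [h1, h2, hg, Subgraph.map_comp, myMapIsoTop f.symm, myMapHomTop]
  -- counting
  have step : _root_.copyCount I.coe K ≤ (CJf.powersetCard S.card).card := by
    rw [_root_.copyCount, ← Set.ncard_coe_finset]
    apply Set.ncard_le_ncard_of_injOn T
    · intro B hB
      simp only [Finset.mem_coe, Finset.mem_powersetCard]
      exact ⟨((main B hB).1).1, ((main B hB).1).2⟩
    · intro B₁ h₁ B₂ h₂ hEq
      rw [← (main B₁ h₁).2, ← (main B₂ h₂).2, hEq]
  rw [Finset.card_powersetCard] at step
  have : CJf.card = copyCount J K := by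
    rw [_root_.copyCount, hCJf, Set.ncard_eq_toFinset_card _ hCJfin]
  rwa [this] at step

/-- If `H` is `q`-sparse, then for any graph `J`, any collection of pairwise edge-disjoint
copies of `J` in `H` has size at most `e · E_q X_J`; that is, `ν(H,J) ≤ e · E_q X_J`. -/
theorem edge_disjoint_copies_bound {n : ℕ} (q : ℝ) (hq0 : 0 ≤ q) (hq1 : q ≤ 1)
    (H : SimpleGraph (Fin n)) (hH : qSparse q H)
    {α : Type*} (J : SimpleGraph α)
    (S : Finset H.Subgraph)
    (hiso : ∀ A ∈ S, Nonempty (SimpleGraph.Subgraph.coe A ≃g J))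
    (hdisj : ∀ A ∈ S, ∀ B ∈ S, A ≠ B → A.edgeSet ∩ B.edgeSet = ∅) :
    (S.card : ℝ) ≤ Real.exp 1 * expCopies n J q := by
  classical
  have hE0 : 0 ≤ expCopies n J q :=
    mul_nonneg (Nat.cast_nonneg _) (pow_nonneg hq0 _)
  rcases Finset.eq_empty_or_nonempty S with rfl | hne
  · simpa using mul_nonneg (Real.exp_pos 1).le hE0
  set t := S.card with ht
  set m := (J.edgeSet).ncard with hm
  set I : H.Subgraph := S.sup id with hI
  have hmA : ∀ A ∈ S, A.edgeSet.ncard = m := fun A hA => by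
    rw [← myNcardEdgeCoe A]; exact myIsoEdgeCard (hiso A hA).some
  have hIedge : I.coe.edgeSet.ncard = t * m := by
    rw [myNcardEdgeCoe, hI, mySupEdgeCard S m hmA hdisj]
  have key1 : (1:ℝ) ≤ (_root_.copyCount I.coe (⊤ : SimpleGraph (Fin n)) : ℝ) * q ^ (t*m) := by
    have h := hH I
    rw [expCopies, hIedge] at h
    exact h
  have key2 := myKey2 J S hiso
  set NJ := copyCount J (⊤ : SimpleGraph (Fin n)) with hNJ
  set NI := _root_.copyCount I.coe (⊤ : SimpleGraph (Fin n)) with hNI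
  have hfac : (t.factorial : ℝ) ≤ (expCopies n J q)^t := by
    have h1 : (NI : ℝ) * (t.factorial) ≤ (NJ:ℝ)^t := by
      calc (NI:ℝ) * t.factorial ≤ (NJ.choose t : ℝ) * t.factorial := by
            have : (NI:ℝ) ≤ (NJ.choose t : ℝ) := by exact_mod_cast key2
            gcongr
        _ = ((t.factorial * NJ.choose t : ℕ) : ℝ) := by push_cast; ring
        _ = ((NJ.descFactorial t : ℕ) : ℝ) := by
            rw [← Nat.descFactorial_eq_factorial_mul_choose]
        _ ≤ ((NJ^t : ℕ) : ℝ) := by exact_mod_cast NJ.descFactorial_le_pow t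
        _ = (NJ:ℝ)^t := by push_cast; ring
    calc (t.factorial : ℝ) = 1 * t.factorial := (one_mul _).symm
      _ ≤ ((NI:ℝ) * q^(t*m)) * t.factorial := by
          gcongr
      _ = ((NI:ℝ) * t.factorial) * q^(t*m) := by ring
      _ ≤ (NJ:ℝ)^t * q^(t*m) := by
          gcongr
      _ = ((NJ:ℝ) * q^m)^t := by rw [mul_pow, ← pow_mul, Nat.mul_comm]
      _ = (expCopies n J q)^t := by rw [expCopies]
  have hpow : ((t:ℝ))^t ≤ (Real.exp 1 * expCopies n J q)^t := by
    have h1 : ((t:ℝ))^t / t.factorial ≤ Real.exp t :=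
      Real.pow_div_factorial_le_exp (t:ℝ) (Nat.cast_nonneg t) t
    have hfp : (0:ℝ) < t.factorial := by exact_mod_cast t.factorial_pos
    have h2 : ((t:ℝ))^t ≤ Real.exp t * t.factorial := by
      rw [div_le_iff₀ hfp] at h1
      linarith
    calc ((t:ℝ))^t ≤ Real.exp t * t.factorial := h2
      _ ≤ Real.exp t * (expCopies n J q)^t :=
          mul_le_mul_of_nonneg_left hfac (Real.exp_pos _).le
      _ = (Real.exp 1 * expCopies n J q)^t := by
          rw [mul_pow, Real.exp_one_pow]
  have ht0 : t ≠ 0 := hne.card_pos.ne'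
  exact le_of_pow_le_pow_left₀ ht0 (by positivity) hpow
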